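/- Let A be a bounded subset of ℝ^d and let M ∈ SO(d) be a rotation matrix. Then A △ MA ⊆ ⋃ { ℓ(a, Ma) : a ∈ ∂A }, i.e. the symmetric difference of A and its rotated image MA is contained in the union over all boundary points a of A of the line segments from a to Ma. -/

import Mathlib

open MeasureTheory Set

set_option linter.unnecessarySeqFocus false

section Core
variable {d : ℕ}

lemma aux_reach_frontier {V : Type*} [TopologicalSpace V] (A : Set V) (g : ℝ → V) {c : ℝ}
    (hc : 0 ≤ c) (hg : ContinuousOn g (Icc 0 c)) (h0 : g 0 ∈ closure A) :
    (∃ t ∈ Icc 0 c, g t ∈ frontier A) ∨ g c ∈ interior A := by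
  by_contra hcon
  push_neg at hcon
  obtain ⟨hfr, hint⟩ := hcon
  set T : Set ℝ := Icc 0 c ∩ g ⁻¹' (closure A) with hT
  have hTsub : ∀ t ∈ T, g t ∈ interior A := by
    intro t ht
    rcases (closure_eq_interior_union_frontier A ▸ ht.2 : g t ∈ interior A ∪ frontier A) with h | h
    · exact h
    · exact absurd h (hfr t ht.1)
  have hTclosed : IsClosed T := hg.preimage_isClosed_of_isClosed isClosed_Icc isClosed_closure
  have hTc : IsCompact T := isCompact_Icc.of_isClosed_subset hTclosed inter_subset_left
  have hTne : T.Nonempty := ⟨0, ⟨le_refl 0, hc⟩, h0⟩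
  obtain ⟨t₀, ht₀T, ht₀g⟩ := hTc.exists_isGreatest hTne
  have ht₀int : g t₀ ∈ interior A := hTsub t₀ ht₀T
  have ht₀c : t₀ < c := by
    rcases lt_or_eq_of_le ht₀T.1.2 with h | h
    · exact h
    · exact absurd (h ▸ ht₀int) hint
  have hcw : ContinuousWithinAt g (Icc 0 c) t₀ := hg t₀ ht₀T.1
  have ev : ∀ᶠ t in nhdsWithin t₀ (Icc 0 c), g t ∈ interior A :=
    hcw (isOpen_interior.mem_nhds ht₀int)
  have hsub : Ioc t₀ c ⊆ Icc 0 c := fun t ht => ⟨le_trans ht₀T.1.1 ht.1.le, ht.2⟩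
  have ev' : ∀ᶠ t in nhdsWithin t₀ (Ioc t₀ c), g t ∈ interior A :=
    ev.filter_mono (nhdsWithin_mono t₀ hsub)
  have hne : (nhdsWithin t₀ (Ioc t₀ c)).NeBot := left_nhdsWithin_Ioc_neBot ht₀c
  obtain ⟨t₁, ht₁int, ht₁mem⟩ := (ev'.and eventually_mem_nhdsWithin).exists
  have ht₁T : t₁ ∈ T := ⟨hsub ht₁mem, interior_subset_closure ht₁int⟩
  exact absurd (ht₀g ht₁T) (not_le.mpr ht₁mem.1)

local notation "V" => EuclideanSpace ℝ (Fin d)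

set_option maxHeartbeats 1000000 in
set_option synthInstance.maxHeartbeats 400000 in
lemma core_lemma (A : Set (EuclideanSpace ℝ (Fin d))) (hA : Bornology.IsBounded A)
    (L : EuclideanSpace ℝ (Fin d) ≃ₗᵢ[ℝ] EuclideanSpace ℝ (Fin d))
    {x : EuclideanSpace ℝ (Fin d)} (hx : x ∈ A) (hx' : x ∉ (fun v => L v) '' A) :
    ∃ a ∈ frontier A, x ∈ segment ℝ a (L a) := by
  classical
  set Lm : V →ₗ[ℝ] V := (L.toLinearEquiv : V →ₗ[ℝ] V) with hLm
  have hLmapp : ∀ v : V, Lm v = L v := fun v => rfl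
  set E : Submodule ℝ V := LinearMap.ker (Lm + LinearMap.id) with hEdef
  have hE : ∀ v : V, v ∈ E ↔ L v = -v := by
    intro v
    rw [hEdef, LinearMap.mem_ker, LinearMap.add_apply, LinearMap.id_apply, hLmapp,
      add_eq_zero_iff_eq_neg]
  set F := Eᗮ with hFdef
  have hLF : ∀ v ∈ F, Lm v ∈ F := by
    intro v hv
    rw [Submodule.mem_orthogonal]
    intro e he
    have he' : L e = -e := (hE e).mp he
    have h1 : L (-e) = e := by rw [map_neg, he', neg_neg]
    have h2 : (inner ℝ e (Lm v) : ℝ) = inner ℝ (L (-e)) (L v) := by rw [h1, hLmapp]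
    rw [h2, LinearIsometryEquiv.inner_map_map, inner_neg_left,
      (Submodule.mem_orthogonal E v).mp hv e he, neg_zero]
  set LFc : F →L[ℝ] F := LinearMap.toContinuousLinearMap (Lm.restrict hLF) with hLFc
  have hLFcapp : ∀ w : F, (LFc w : V) = L w := fun w => rfl
  set R : ℝ → (F →L[ℝ] F) := fun t => (1 - t) • (1 : F →L[ℝ] F) + t • LFc with hRdef
  have hRapp : ∀ (t : ℝ) (w : F), ((R t w : F) : V) = (1 - t) • (w : V) + t • L w := by
    intro t w
    rw [hRdef]
    simp only [ContinuousLinearMap.add_apply, ContinuousLinearMap.smul_apply,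
      ContinuousLinearMap.one_apply, Submodule.coe_add, SetLike.val_smul, hLFcapp]
  have hRunit : ∀ t ∈ Icc (0:ℝ) 1, IsUnit (R t) := by
    intro t ht
    have hinj : Function.Injective (R t) := by
      rw [injective_iff_map_eq_zero]
      intro w hw
      by_contra hwne
      have hco : (1 - t) • (w : V) + t • L w = 0 := by
        rw [← hRapp t w, hw, Submodule.coe_zero]
      have hnorm : ‖(1 - t) • (w : V)‖ = ‖t • (L w : V)‖ := by
        rw [eq_neg_of_add_eq_zero_left hco, norm_neg]
      rw [norm_smul, norm_smul, L.norm_map, Real.norm_eq_abs, Real.norm_eq_abs,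
        abs_of_nonneg (by linarith [ht.2] : (0:ℝ) ≤ 1 - t), abs_of_nonneg ht.1] at hnorm
      have hwnorm : ‖(w : V)‖ ≠ 0 := by
        simpa [Submodule.coe_eq_zero] using hwne
      have hthalf : 1 - t = t := mul_right_cancel₀ hwnorm hnorm
      have ht2 : t = 1/2 := by linarith
      have hwE : (w : V) ∈ E := by
        rw [hE]
        rw [ht2] at hco
        have h4 : (1/2 : ℝ) • ((w : V) + L w) = 0 := by
          rw [smul_add]
          convert hco using 2 <;> norm_num
        have h5 : (w : V) + L w = 0 := by
          rcases smul_eq_zero.mp h4 with h | h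
          · norm_num at h
          · exact h
        exact eq_neg_of_add_eq_zero_right h5
      have hw0 : (w : V) = 0 := by
        have h0 := (Submodule.mem_orthogonal E (w : V)).mp w.2 (w : V) hwE
        exact inner_self_eq_zero.mp h0
      exact hwne (Subtype.ext hw0)
    have hbij : Function.Bijective ((R t : F →ₗ[ℝ] F)) :=
      ⟨hinj, (LinearMap.injective_iff_surjective).mp hinj⟩
    let eqv : F ≃ₗ[ℝ] F := LinearEquiv.ofBijective _ hbij
    let eL : F ≃L[ℝ] F := eqv.toContinuousLinearEquiv
    exact ⟨(ContinuousLinearEquiv.unitsEquiv ℝ F).symm eL, by ext w; rfl⟩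
  have hRcont : Continuous R := by
    rw [hRdef]
    exact ((continuous_const.sub continuous_id).smul continuous_const).add
      (continuous_id.smul continuous_const)
  have hInvCont : ContinuousOn (fun t => Ring.inverse (R t)) (Icc (0:ℝ) 1) := by
    intro t ht
    have hu := hRunit t ht
    have h1 : ContinuousAt (fun t => Ring.inverse (R t)) t := by
      have h2 := NormedRing.inverse_continuousAt (R := F →L[ℝ] F) hu.unit
      rw [IsUnit.unit_spec] at h2
      exact h2.comp hRcont.continuousAt
    exact h1.continuousWithinAt
  set xE : V := (E.orthogonalProjectionOnto x : V) with hxEdef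
  have hxEE : xE ∈ E := SetLike.coe_mem _
  set xF : F := ⟨x - xE, Submodule.sub_starProjection_mem_orthogonal (K := E) x⟩ with hxFdef
  have hxFe : (xF : V) = x - xE := rfl
  set gF : ℝ → F := fun t => Ring.inverse (R t) xF with hgFdef
  have hgFcont : ContinuousOn gF (Icc (0:ℝ) 1) := hInvCont.clm_apply continuousOn_const
  have hgFeq : ∀ t ∈ Icc (0:ℝ) 1, (1 - t) • (gF t : V) + t • L (gF t) = (xF : V) := by
    intro t ht
    have h2 : (R t) (gF t) = xF := by
      have h3 := Ring.mul_inverse_cancel _ (hRunit t ht)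
      have h4 : (R t) (Ring.inverse (R t) xF) = ((R t) * Ring.inverse (R t)) xF := rfl
      rw [hgFdef]
      simp only
      rw [h4, h3, ContinuousLinearMap.one_apply]
    rw [← hRapp t (gF t), h2]
  have hgF0 : gF 0 = xF := by
    have h1 : R 0 = 1 := by
      refine ContinuousLinearMap.ext fun w => Subtype.ext ?_
      rw [hRapp 0 w]
      simp
    rw [hgFdef]
    simp only [h1, Ring.inverse_one, ContinuousLinearMap.one_apply]
  obtain ⟨B0, hB0⟩ := isCompact_Icc.exists_bound_of_continuousOn hgFcont
  set B : ℝ := max B0 0 with hBdef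
  have hB : ∀ t ∈ Icc (0:ℝ) 1, ‖(gF t : V)‖ ≤ B := fun t ht =>
    le_trans (hB0 t ht) (le_max_left _ _)
  have hBpos : 0 ≤ B := le_max_right _ _
  obtain ⟨C0, hC0⟩ := hA.closure.exists_norm_le
  set C : ℝ := max C0 0 with hCdef
  have hC : ∀ y ∈ closure A, ‖y‖ ≤ C := fun y hy => le_trans (hC0 y hy) (le_max_left _ _)
  have hCpos : 0 ≤ C := le_max_right _ _
  by_cases hxE0 : xE = 0
  · -- x ∈ F : use domain [0,1]
    have hx_eq : (xF : V) = x := by rw [hxFe, hxE0, sub_zero]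
    set g : ℝ → V := fun t => (gF t : V) with hgdef
    have hgcont : ContinuousOn g (Icc (0:ℝ) 1) :=
      continuous_subtype_val.comp_continuousOn hgFcont
    have hg0 : g 0 = x := by rw [hgdef]; simp only; rw [hgF0, hx_eq]
    rcases aux_reach_frontier A g zero_le_one hgcont (hg0 ▸ subset_closure hx)
      with ⟨t, htI, htfr⟩ | hcint
    · refine ⟨g t, htfr, 1 - t, t, by linarith [htI.2], htI.1, by ring, ?_⟩
      exact (hgFeq t htI).trans hx_eq
    · exfalso
      have h1 : L (g 1) = x := by
        have h2 := hgFeq 1 (by norm_num)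
        rw [hx_eq] at h2
        simpa using h2
      exact hx' ⟨g 1, interior_subset hcint, h1⟩
  · -- xE ≠ 0 : use domain [0, c] with c < 1/2
    have hε : 0 < ‖xE‖ := norm_pos_iff.mpr hxE0
    have hCB : 0 < C + B + 1 := by positivity
    set δ : ℝ := min (1/2) (‖xE‖ / (2 * (C + B + 1))) with hδdef
    have hδpos : 0 < δ := lt_min (by norm_num) (by positivity)
    have hδle : δ ≤ ‖xE‖ / (2 * (C + B + 1)) := min_le_right _ _
    have hδhalf : δ ≤ 1/2 := min_le_left _ _
    set c : ℝ := 1/2 - δ with hcdef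
    have hc0 : 0 ≤ c := by rw [hcdef]; linarith
    have hchalf : c < 1/2 := by rw [hcdef]; linarith
    have hc1 : c ≤ 1 := by rw [hcdef]; linarith
    have hIccsub : Icc (0:ℝ) c ⊆ Icc (0:ℝ) 1 := Icc_subset_Icc le_rfl hc1
    have hnet : ∀ t ∈ Icc (0:ℝ) c, 1 - 2*t ≠ 0 := by
      intro t ht
      have := ht.2
      have : t < 1/2 := lt_of_le_of_lt ht.2 hchalf
      intro hzero
      nlinarith
    set g : ℝ → V := fun t => (1 - 2*t)⁻¹ • xE + (gF t : V) with hgdef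
    have hgcont : ContinuousOn g (Icc 0 c) := by
      apply ContinuousOn.add
      · exact (ContinuousOn.inv₀ (by fun_prop) hnet).smul continuousOn_const
      · exact continuous_subtype_val.comp_continuousOn (hgFcont.mono hIccsub)
    have hg0 : g 0 = x := by
      rw [hgdef]
      simp only [mul_zero, sub_zero, inv_one, one_smul]
      rw [hgF0, hxFe]
      abel
    rcases aux_reach_frontier A g hc0 hgcont (hg0 ▸ subset_closure hx)
      with ⟨t, htI, htfr⟩ | hcint
    · refine ⟨g t, htfr, 1 - t, t,
        by linarith [htI.2, hchalf], htI.1, by ring, ?_⟩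
      have hLxE : L xE = -xE := (hE xE).mp hxEE
      have hgFt := hgFeq t (hIccsub htI)
      have hnetT := hnet t htI
      rw [hgdef]
      simp only
      rw [map_add, _root_.map_smul, hLxE]
      have expand : (1 - t) • ((1-2*t)⁻¹ • xE + (gF t : V)) + t • ((1-2*t)⁻¹ • (-xE) + L (gF t))
          = (((1-t) * (1-2*t)⁻¹ - t * (1-2*t)⁻¹) • xE) + ((1-t) • (gF t : V) + t • L (gF t)) := by
        match_scalars <;> ring
      rw [expand, hgFt, hxFe]
      have hscal : (1-t) * (1-2*t)⁻¹ - t * (1-2*t)⁻¹ = 1 := by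
        rw [← sub_mul, show (1 - t) - t = 1 - 2*t by ring, mul_inv_cancel₀ hnetT]
      rw [hscal, one_smul]
      abel
    · exfalso
      have hmem := interior_subset_closure hcint
      have hle : ‖g c‖ ≤ C := hC _ hmem
      have hgFb : ‖(gF c : V)‖ ≤ B := hB c (hIccsub ⟨hc0, le_rfl⟩)
      have htri : ‖(1 - 2*c)⁻¹ • xE‖ ≤ ‖g c‖ + ‖(gF c : V)‖ := by
        have hrw : (1 - 2*c)⁻¹ • xE = g c - (gF c : V) := by
          rw [hgdef]; simp
        rw [hrw]
        exact norm_sub_le _ _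
      have h2δ : 1 - 2*c = 2*δ := by rw [hcdef]; ring
      have hnormsm : ‖(1 - 2*c)⁻¹ • xE‖ = (2*δ)⁻¹ * ‖xE‖ := by
        rw [norm_smul, h2δ, Real.norm_eq_abs, abs_of_pos (by positivity)]
      have hkey : (C + B + 1) * (2*δ) ≤ ‖xE‖ := by
        have h6 : δ * (2 * (C + B + 1)) ≤ ‖xE‖ := by
          rw [le_div_iff₀ (by positivity)] at hδle
          linarith [hδle]
        nlinarith
      have hbig : C + B + 1 ≤ (2*δ)⁻¹ * ‖xE‖ := by
        rw [le_inv_mul_iff₀ (by positivity)]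
        linarith [hkey]
      rw [hnormsm] at htri
      linarith

end Core

/-- For a bounded set `A ⊆ ℝ^d` and a rotation matrix `M ∈ SO(d)`, the
symmetric difference `A △ MA` is covered by the union of the segments `ℓ(a, Ma)`
over `a ∈ ∂A`. -/
theorem symmDiff_rotate_subset_iUnion_segment
    (d : ℕ) (A : Set (EuclideanSpace ℝ (Fin d))) (hA : Bornology.IsBounded A)
    (M : Matrix (Fin d) (Fin d) ℝ) (hM : M ∈ Matrix.specialOrthogonalGroup (Fin d) ℝ) :
    symmDiff A (Matrix.toEuclideanLin M '' A) ⊆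
      ⋃ a ∈ frontier A, segment ℝ a (Matrix.toEuclideanLin M a) := by
  classical
  have horth : M ∈ Matrix.orthogonalGroup (Fin d) ℝ :=
    (Matrix.mem_specialOrthogonalGroup_iff.mp hM).1
  have h1 : M * star M = 1 := (Matrix.mem_orthogonalGroup_iff (Fin d) ℝ).mp horth
  have h2 : star M * M = 1 := (Matrix.mem_orthogonalGroup_iff' (Fin d) ℝ).mp horth
  set Lm : EuclideanSpace ℝ (Fin d) →ₗ[ℝ] EuclideanSpace ℝ (Fin d) := Matrix.toEuclideanLin M
    with hLmdef
  set Lm' : EuclideanSpace ℝ (Fin d) →ₗ[ℝ] EuclideanSpace ℝ (Fin d) :=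
    Matrix.toEuclideanLin (star M) with hLmdef'
  have hcomp : ∀ (P Q : Matrix (Fin d) (Fin d) ℝ) (v : EuclideanSpace ℝ (Fin d)),
      Matrix.toEuclideanLin P (Matrix.toEuclideanLin Q v) = Matrix.toEuclideanLin (P * Q) v := by
    intro P Q v
    simp [Matrix.toEuclideanLin_apply, Matrix.mulVec_mulVec]
  have hone : ∀ v : EuclideanSpace ℝ (Fin d), Matrix.toEuclideanLin (1 : Matrix (Fin d) (Fin d) ℝ) v = v := by
    intro v
    simp [Matrix.toEuclideanLin_apply]
  have hLL' : ∀ v, Lm (Lm' v) = v := by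
    intro v; rw [hLmdef, hLmdef', hcomp, h1, hone]
  have hL'L : ∀ v, Lm' (Lm v) = v := by
    intro v; rw [hLmdef, hLmdef', hcomp, h2, hone]
  set e : EuclideanSpace ℝ (Fin d) ≃ₗ[ℝ] EuclideanSpace ℝ (Fin d) :=
    LinearEquiv.ofLinear Lm Lm' (LinearMap.ext hLL') (LinearMap.ext hL'L) with hedef
  have headj : Lm' = LinearMap.adjoint Lm := by
    rw [hLmdef, hLmdef', ← Matrix.toEuclideanLin_conjTranspose_eq_adjoint]
    rfl
  have hinner : ∀ v w : EuclideanSpace ℝ (Fin d), (inner ℝ (e v) (e w) : ℝ) = inner ℝ v w := by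
    intro v w
    have h3 : (inner ℝ (Lm v) (Lm w) : ℝ) = inner ℝ v w := by
      rw [← hL'L v]
      nth_rewrite 2 [headj]
      rw [LinearMap.adjoint_inner_left]
      rw [hLL']
    exact h3
  set L : EuclideanSpace ℝ (Fin d) ≃ₗᵢ[ℝ] EuclideanSpace ℝ (Fin d) :=
    e.isometryOfInner hinner with hLdef
  have hLapp : ∀ v, L v = Matrix.toEuclideanLin M v := fun v => rfl
  have hLsymm : ∀ v, L.symm v = Lm' v := fun v => rfl
  intro x hx
  rw [Set.mem_symmDiff] at hx
  have himg : (fun v => L v) '' A = Matrix.toEuclideanLin M '' A := by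
    apply Set.image_congr
    intro a _
    exact hLapp a
  rcases hx with ⟨hxA, hxnL⟩ | ⟨hxL, hxnA⟩
  · obtain ⟨a, hafr, haseg⟩ := core_lemma A hA L hxA (by rw [himg]; exact hxnL)
    refine Set.mem_biUnion hafr ?_
    rw [← hLapp a]
    exact haseg
  · obtain ⟨b, hbA, hbx⟩ := hxL
    have hbnot : b ∉ (fun v => L.symm v) '' A := by
      rintro ⟨a, haA, hab⟩
      apply hxnA
      have h5 : L (L.symm a) = a := L.apply_symm_apply a
      rw [hLapp] at h5
      have h6 : x = a := by
        rw [← hbx, ← hab]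
        exact h5
      rw [h6]; exact haA
    obtain ⟨a, hafr, haseg⟩ := core_lemma A hA L.symm hbA hbnot
    refine Set.mem_biUnion hafr ?_
    -- b ∈ segment a (L.symm a), x = L b ⇒ x ∈ segment (L a) a = segment a (L a)
    have himgseg : L '' segment ℝ a (L.symm a) = segment ℝ (L a) (L (L.symm a)) := by
      have := image_segment ℝ (Lm.toAffineMap) a (L.symm a)
      simpa [hLapp] using this
    have hxmem : x ∈ segment ℝ (L a) (L (L.symm a)) := by
      rw [← himgseg]
      exact ⟨b, haseg, by rw [← hbx]; exact (hLapp b).symm⟩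
    rw [L.apply_symm_apply] at hxmem
    rw [segment_symm] at hxmem
    rw [← hLapp a]
    exact hxmem
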